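/- Let μ, n, r, d be positive integers with r ≤ n and n−r ≤ d ≤ n−1, set b = d+1−(n−r), N = rn, and let q = 2^w satisfy q ≥ max{rnμ, bn}. Let β ∈ GF(q) have multiplicative order O(β) ≥ max{rnμ, bn} and set β_{i,j} = β^{(i−1)+(j−1)n} for 1 ≤ i ≤ n, 1 ≤ j ≤ b. Then for every a ∈ {0, 1, …, b^n − 1} with base-b digits a_1,…,a_n, the matrix H^{(a)} of Construction 1 satisfies the (r, s=2) sector-disk criterion: for every subset T ⊆ {1,…,n} with |T| = r, setting E_i = {(i−1)n + t : t ∈ T}, and for every 2-element set F ⊆ {1, …, μn} \ (∪_i E_i), the (rμ+2) × (rμ+2) submatrix of H^{(a)} formed by the columns indexed by (∪_i E_i) ∪ F is invertible. -/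
import Mathlib


/-- The parity-check matrix `H^(a)` of Construction 1 (locally `d`-MSR PMDS/SD array
codes), of size `(rμ+2) × (μn)` over a field `F`, for the row index `a` with base-`b`
digits `a_t = (a / b^t) % b` (0-indexed `t`).  With `β_{t, a_t+1} = β^(t + a_t · n)`,
rows `0, …, rμ-1` form the `μ` diagonal Vandermonde blocks `H₀^(a)` with entries
`β_{t,a_t+1}^u` (block `i = v / r`, row-within-block `u = v % r`); row `rμ` has entries
`β_{t,a_t+1}^r`; row `rμ+1` has entries `β^(-jN) · β_{t,a_t+1}⁻¹`, where `j = c / n`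
is the (0-indexed) local group of column `c`. -/
noncomputable def construction1H (μ n r N b : ℕ) {F : Type*} [Field F]
    (β : Fˣ) (a : ℕ) :
    Matrix (Fin (r * μ + 2)) (Fin (μ * n)) F :=
  fun v c =>
    if (v : ℕ) < r * μ then
      if (c : ℕ) / n = (v : ℕ) / r then
        (((β ^ ((c : ℕ) % n + a / b ^ ((c : ℕ) % n) % b * n)) ^ ((v : ℕ) % r) : Fˣ) : F)
      else 0
    else if (v : ℕ) = r * μ then
      (((β ^ ((c : ℕ) % n + a / b ^ ((c : ℕ) % n) % b * n)) ^ r : Fˣ) : F)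
    else
      ((β ^ (-(((c : ℕ) / n : ℤ) * (N : ℤ))) *
        (β ^ ((c : ℕ) % n + a / b ^ ((c : ℕ) % n) % b * n))⁻¹ : Fˣ) : F)

/-- The `(r, s)` sector-disk criterion for a matrix with `rμ + s` rows and `μn` columns,
columns partitioned into `μ` local groups of `n` consecutive columns: for every set
`T ⊆ {1,…,n}` of `r` within-group positions (used as the erased positions `E_i` in *every*
local group) and every `s`-element set `Fs` of further columns avoiding those positions,
the square submatrix on the columns `(∪ᵢ E_i) ∪ Fs` is invertible. -/
def sdCriterion {F : Type*} [Field F] (μ n r s : ℕ) (hn : 0 < n)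
    (H : Matrix (Fin (r * μ + s)) (Fin (μ * n)) F) : Prop :=
  ∀ T : Finset (Fin n),
    T.card = r →
    ∀ Fs : Finset (Fin (μ * n)),
      Fs.card = s →
      (∀ c ∈ Fs, (⟨(c : ℕ) % n, Nat.mod_lt _ hn⟩ : Fin n) ∉ T) →
      ∀ e : Fin (r * μ + s) → Fin (μ * n),
        Function.Injective e →
        (Set.range e =
          {c : Fin (μ * n) | (⟨(c : ℕ) % n, Nat.mod_lt _ hn⟩ : Fin n) ∈ T} ∪ ↑Fs) →
        IsUnit (H.submatrix id e).det

set_option maxHeartbeats 2000000 in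
/-- Let `μ, n, r, d` be positive integers with `r ≤ n` and
`n−r ≤ d ≤ n−1`, set `b = d+1−(n−r)`, `N = rn`, and let `q = 2^w` satisfy
`q ≥ max{rnμ, bn}`. Let `β ∈ GF(q)` have multiplicative order at least `max{rnμ, bn}`
and set `β_{i,j} = β^((i−1)+(j−1)n)`.  Then for every `a ∈ {0, …, b^n − 1}` the matrix
`H^(a)` of Construction 1 satisfies the `(r, s = 2)` sector-disk criterion. -/
theorem statement3 (w μ n r d b : ℕ)
    (hw : 0 < w) (hμ : 0 < μ) (hn : 0 < n) (hr : 0 < r) (hd : 0 < d)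
    (hrn : r ≤ n) (hdl : n - r ≤ d) (hdh : d ≤ n - 1)
    (hb : b = d + 1 - (n - r))
    (F : Type*) [Field F] [Fintype F] (hF : Fintype.card F = 2 ^ w)
    (hq : max (r * n * μ) (b * n) ≤ 2 ^ w)
    (β : Fˣ) (hβ : max (r * n * μ) (b * n) ≤ orderOf β)
    (a : ℕ) (ha : a < b ^ n) :
    sdCriterion μ n r 2 hn (construction1H μ n r (r * n) b β a) := by
  classical
  intro T hT Fs hFs hFsT e heinj herange
  set M := construction1H μ n r (r * n) b β a with hM
  rw [isUnit_iff_ne_zero]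
  intro hdet
  obtain ⟨v, hv0, hveq⟩ := Matrix.exists_mulVec_eq_zero_iff.mpr hdet
  -- basic numeric facts
  have hb0 : 0 < b := by omega
  have hbr : b ≤ r := by omega
  have hbn_ord : b * n ≤ orderOf β := le_trans (le_max_right _ _) hβ
  have hrnμ_ord : r * n * μ ≤ orderOf β := le_trans (le_max_left _ _) hβ
  -- exponents and evaluation points
  set et : ℕ → ℕ := fun t => t + a / b ^ t % b * n with het
  have hetlt : ∀ t : ℕ, t < n → et t < b * n := by
    intro t ht
    have hm : a / b ^ t % b < b := Nat.mod_lt _ hb0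
    have h1 : t + a / b ^ t % b * n < (a / b ^ t % b + 1) * n := by
      rw [add_mul, one_mul]; omega
    exact lt_of_lt_of_le h1 (Nat.mul_le_mul_right n hm)
  have hetinj : ∀ t1 t2 : Fin n, et (t1 : ℕ) = et (t2 : ℕ) → t1 = t2 := by
    intro t1 t2 h12
    have h1 : ∀ t : Fin n, et (t : ℕ) % n = (t : ℕ) := by
      intro t
      show ((t : ℕ) + a / b ^ (t : ℕ) % b * n) % n = (t : ℕ)
      rw [Nat.add_mul_mod_self_right, Nat.mod_eq_of_lt t.isLt]
    apply Fin.ext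
    rw [← h1 t1, ← h1 t2, h12]
  set xu : Fin n → Fˣ := fun t => β ^ et (t : ℕ) with hxu
  set x : Fin n → F := fun t => ((xu t : Fˣ) : F) with hx
  have hxne : ∀ t, x t ≠ 0 := fun t => Units.ne_zero _
  have hxinj : Function.Injective x := by
    intro t1 t2 h12
    have hu : xu t1 = xu t2 := Units.ext h12
    have hu2 : β ^ et (t1 : ℕ) = β ^ et (t2 : ℕ) := hu
    have he2 : et (t1 : ℕ) = et (t2 : ℕ) :=
      pow_injOn_Iio_orderOf
        (Set.mem_Iio.2 (lt_of_lt_of_le (hetlt _ t1.isLt) hbn_ord))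
        (Set.mem_Iio.2 (lt_of_lt_of_le (hetlt _ t2.isLt) hbn_ord)) hu2
    exact hetinj t1 t2 he2
  set tOf : Fin (μ * n) → Fin n := fun col => ⟨(col : ℕ) % n, Nat.mod_lt _ hn⟩ with htOf
  have hjlt : ∀ col : Fin (μ * n), (col : ℕ) / n < μ :=
    fun col => (Nat.div_lt_iff_lt_mul hn).2 col.isLt
  -- the coefficient function on columns
  set c : Fin (μ * n) → F := fun col => ∑ k, if e k = col then v k else 0 with hc
  have hce : ∀ k, c (e k) = v k := by
    intro k
    show (∑ k', if e k' = e k then v k' else 0) = v k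
    rw [Finset.sum_congr rfl (fun k' _ => by
      rw [show (if e k' = e k then v k' else 0) = if k' = k then v k' else 0 from by
        congr 1; simp [heinj.eq_iff]])]
    simp
  have hcout : ∀ col, col ∉ Set.range e → c col = 0 := by
    intro col hcol
    apply Finset.sum_eq_zero
    intro k _
    rw [if_neg]
    intro hEq
    exact hcol ⟨k, hEq⟩
  have hrows : ∀ u : Fin (r * μ + 2), ∑ col, M u col * c col = 0 := by
    intro u
    have h2 : ((M.submatrix id e).mulVec v) u = 0 := by rw [hveq]; rfl
    have h3 : ∑ k, M u (e k) * v k = 0 := by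
      rw [← h2]
      simp [Matrix.mulVec, dotProduct, Matrix.submatrix_apply]
    calc ∑ col, M u col * c col
        = ∑ col, ∑ k, (if e k = col then M u col * v k else 0) := by
          refine Finset.sum_congr rfl fun col _ => ?_
          rw [hc]
          rw [Finset.mul_sum]
          exact Finset.sum_congr rfl fun k _ => by rw [mul_ite, mul_zero]
      _ = ∑ k, ∑ col, (if e k = col then M u col * v k else 0) := Finset.sum_comm
      _ = ∑ k, M u (e k) * v k := by
          refine Finset.sum_congr rfl fun k _ => ?_
          rw [Finset.sum_ite_eq]
          simp
      _ = 0 := h3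
  -- the per-group moment equations
  have hgroup : ∀ j i : ℕ, j < μ → i < r →
      ∑ col ∈ Finset.univ.filter (fun col : Fin (μ * n) => (col : ℕ) / n = j),
        x (tOf col) ^ i * c col = 0 := by
    intro j i hj hi
    have hlt : j * r + i < r * μ := by
      have h1 : j * r + i < (j + 1) * r := by rw [add_mul, one_mul]; omega
      have h2 : (j + 1) * r ≤ μ * r := Nat.mul_le_mul_right r hj
      rw [mul_comm r μ]
      exact lt_of_lt_of_le h1 h2
    have hu : j * r + i < r * μ + 2 := by omega
    have h0 := hrows ⟨j * r + i, hu⟩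
    have e1 : (j * r + i) / r = j := by
      rw [mul_comm j r, Nat.mul_add_div hr, Nat.div_eq_of_lt hi, add_zero]
    have e2 : (j * r + i) % r = i := by
      rw [mul_comm j r, Nat.mul_add_mod, Nat.mod_eq_of_lt hi]
    have key : ∀ col : Fin (μ * n),
        M ⟨j * r + i, hu⟩ col = if (col : ℕ) / n = j then x (tOf col) ^ i else 0 := by
      intro col
      rw [hM]
      simp only [construction1H, Fin.val_mk]
      rw [if_pos hlt, e1, e2]
      split_ifs with h
      · simp [hx, hxu, het, htOf, Units.val_pow_eq_pow_val]
      · rfl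
    rw [Finset.sum_congr rfl (fun col _ => by rw [key col]) ] at h0
    rw [Finset.sum_filter]
    calc (∑ col : Fin (μ * n), if (col : ℕ) / n = j then x (tOf col) ^ i * c col else 0)
        = ∑ col : Fin (μ * n), (if (col : ℕ) / n = j then x (tOf col) ^ i else 0) * c col :=
          Finset.sum_congr rfl fun col _ => by rw [ite_mul, zero_mul]
      _ = 0 := h0
  -- moment equations for arbitrary polynomials of degree < r
  have hgroupP : ∀ j : ℕ, j < μ → ∀ P : Polynomial F, P.natDegree < r →
      ∑ col ∈ Finset.univ.filter (fun col : Fin (μ * n) => (col : ℕ) / n = j),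
        P.eval (x (tOf col)) * c col = 0 := by
    intro j hj P hP
    have hexp : ∀ col : Fin (μ * n), P.eval (x (tOf col)) * c col
        = ∑ i ∈ Finset.range r, P.coeff i * (x (tOf col) ^ i * c col) := by
      intro col
      rw [Polynomial.eval_eq_sum_range' hP, Finset.sum_mul]
      exact Finset.sum_congr rfl fun i _ => by ring
    rw [Finset.sum_congr rfl fun col _ => hexp col, Finset.sum_comm]
    refine Finset.sum_eq_zero fun i hi => ?_
    rw [← Finset.mul_sum, hgroup j i hj (Finset.mem_range.1 hi), mul_zero]
  -- weighted global moment equations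
  have hglobalP : ∀ (wt : ℕ → F) (P : Polynomial F), P.natDegree < r →
      ∑ col : Fin (μ * n), wt ((col : ℕ) / n) * (P.eval (x (tOf col)) * c col) = 0 := by
    intro wt P hP
    rw [← Finset.sum_fiberwise_of_maps_to (g := fun col : Fin (μ * n) => (col : ℕ) / n)
        (t := Finset.range μ) (fun col _ => Finset.mem_range.2 (hjlt col))]
    refine Finset.sum_eq_zero fun j hj => ?_
    have hcg : ∀ col ∈ Finset.univ.filter (fun col : Fin (μ * n) => (col : ℕ) / n = j),
        wt ((col : ℕ) / n) * (P.eval (x (tOf col)) * c col)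
          = wt j * (P.eval (x (tOf col)) * c col) := by
      intro col hcol
      rw [(Finset.mem_filter.1 hcol).2]
    rw [Finset.sum_congr rfl hcg, ← Finset.mul_sum,
      hgroupP j (Finset.mem_range.1 hj) P hP, mul_zero]
  -- the annihilator polynomial
  set fT : Polynomial F := ∏ t ∈ T, (Polynomial.X - Polynomial.C (x t)) with hfT
  have hfmonic : fT.Monic :=
    Polynomial.monic_prod_of_monic _ _ fun t _ => Polynomial.monic_X_sub_C _
  have hfne : fT ≠ 0 := hfmonic.ne_zero
  have hfdeg : fT.natDegree = r := by
    rw [hfT, Polynomial.natDegree_prod_of_monic _ _ fun t _ => Polynomial.monic_X_sub_C _]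
    simp [Polynomial.natDegree_X_sub_C, hT]
  have hfeval : ∀ z : F, fT.eval z = ∏ t ∈ T, (z - x t) := by
    intro z; rw [hfT]; simp [Polynomial.eval_prod]
  have hfevalT : ∀ t ∈ T, fT.eval (x t) = 0 := fun t ht => by
    rw [hfeval]; exact Finset.prod_eq_zero ht (sub_self _)
  have hfevalne : ∀ t : Fin n, t ∉ T → fT.eval (x t) ≠ 0 := by
    intro t ht
    rw [hfeval]
    refine Finset.prod_ne_zero_iff.2 fun t' ht' => sub_ne_zero.2 fun hx' => ht ?_
    rw [hxinj hx']; exact ht'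
  have hsubdeg : (fT - Polynomial.X ^ r).natDegree < r := by
    rcases eq_or_ne (fT - Polynomial.X ^ r) 0 with h | h
    · rw [h]; simpa using hr
    · rw [Polynomial.natDegree_lt_iff_degree_lt h]
      have hdd : (fT - Polynomial.X ^ r).degree < fT.degree :=
        Polynomial.degree_sub_lt
          (by rw [Polynomial.degree_eq_natDegree hfne, hfdeg, Polynomial.degree_X_pow])
          hfne
          (by rw [hfmonic.leadingCoeff, Polynomial.leadingCoeff_X_pow])
      rwa [Polynomial.degree_eq_natDegree hfne, hfdeg] at hdd
  set c0 : F := fT.coeff 0 with hc0def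
  have hc0 : c0 ≠ 0 := by
    rw [hc0def, Polynomial.coeff_zero_eq_eval_zero, hfeval]
    refine Finset.prod_ne_zero_iff.2 fun t _ => ?_
    simpa using hxne t
  set g : Polynomial F := fT.divX with hgdef
  have hgdeg : g.natDegree < r := by
    rcases eq_or_ne g 0 with h | h
    · rw [h]; simpa using hr
    · rw [Polynomial.natDegree_lt_iff_degree_lt h]
      have hdd := Polynomial.degree_divX_lt hfne
      rw [Polynomial.degree_eq_natDegree hfne, hfdeg] at hdd
      exact hdd
  have hident : ∀ z : F, z ≠ 0 → z⁻¹ * fT.eval z = c0 * z⁻¹ + g.eval z := by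
    intro z hz
    have h1 : fT.eval z = z * g.eval z + c0 := by
      have h2 := congrArg (Polynomial.eval z) (Polynomial.X_mul_divX_add fT)
      simp only [Polynomial.eval_add, Polynomial.eval_mul, Polynomial.eval_X,
        Polynomial.eval_C] at h2
      rw [hgdef, hc0def]
      exact h2.symm
    rw [h1]
    field_simp
    ring
  -- global row r*μ
  have hRowR : ∑ col : Fin (μ * n), x (tOf col) ^ r * c col = 0 := by
    have key : ∀ col : Fin (μ * n),
        M (⟨r * μ, by omega⟩ : Fin (r * μ + 2)) col = x (tOf col) ^ r := by
      intro col
      rw [hM]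
      simp only [construction1H, Fin.val_mk]
      simp [hx, hxu, het, htOf, Units.val_pow_eq_pow_val]
    calc ∑ col : Fin (μ * n), x (tOf col) ^ r * c col
        = ∑ col : Fin (μ * n), M (⟨r * μ, by omega⟩ : Fin (r * μ + 2)) col * c col :=
          Finset.sum_congr rfl fun col _ => by rw [key col]
      _ = 0 := hrows _
  -- global row r*μ+1
  set wβ : ℕ → F := fun j => ((β ^ (-((j : ℤ) * ((r * n : ℕ) : ℤ))) : Fˣ) : F) with hwβ
  have hRowInv : ∑ col : Fin (μ * n),
      wβ ((col : ℕ) / n) * (x (tOf col))⁻¹ * c col = 0 := by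
    have key : ∀ col : Fin (μ * n),
        M (⟨r * μ + 1, by omega⟩ : Fin (r * μ + 2)) col
          = wβ ((col : ℕ) / n) * (x (tOf col))⁻¹ := by
      intro col
      rw [hM]
      simp only [construction1H, Fin.val_mk]
      rw [Units.val_mul, Units.val_inv_eq_inv_val]
      simp only [hwβ, hx, hxu, het, htOf, Int.natCast_div]
      rw [if_neg (show ¬(r * μ + 1 < r * μ) by omega),
        if_neg (show ¬(r * μ + 1 = r * μ) by omega)]
    calc ∑ col : Fin (μ * n), wβ ((col : ℕ) / n) * (x (tOf col))⁻¹ * c col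
        = ∑ col : Fin (μ * n), M (⟨r * μ + 1, by omega⟩ : Fin (r * μ + 2)) col * c col :=
          Finset.sum_congr rfl fun col _ => by rw [key col]
      _ = 0 := hrows _
  -- equation A
  have hAfull : ∑ col : Fin (μ * n), fT.eval (x (tOf col)) * c col = 0 := by
    have h2 := hglobalP (fun _ => 1) (fT - Polynomial.X ^ r) hsubdeg
    simp only [one_mul] at h2
    have h3 : ∀ col : Fin (μ * n), fT.eval (x (tOf col)) * c col
        = (fT - Polynomial.X ^ r).eval (x (tOf col)) * c col + x (tOf col) ^ r * c col := by
      intro col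
      rw [Polynomial.eval_sub, Polynomial.eval_pow, Polynomial.eval_X]
      ring
    rw [Finset.sum_congr rfl fun col _ => h3 col, Finset.sum_add_distrib, h2, hRowR, add_zero]
  -- equation B
  have hBfull : ∑ col : Fin (μ * n),
      wβ ((col : ℕ) / n) * ((x (tOf col))⁻¹ * (fT.eval (x (tOf col)) * c col)) = 0 := by
    have h2 := hglobalP wβ g hgdeg
    have h3 : ∀ col : Fin (μ * n),
        wβ ((col : ℕ) / n) * ((x (tOf col))⁻¹ * (fT.eval (x (tOf col)) * c col))
          = c0 * (wβ ((col : ℕ) / n) * (x (tOf col))⁻¹ * c col)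
            + wβ ((col : ℕ) / n) * (g.eval (x (tOf col)) * c col) := by
      intro col
      have hid := hident (x (tOf col)) (hxne _)
      calc wβ ((col : ℕ) / n) * ((x (tOf col))⁻¹ * (fT.eval (x (tOf col)) * c col))
          = wβ ((col : ℕ) / n) * (((x (tOf col))⁻¹ * fT.eval (x (tOf col))) * c col) := by
            ring
        _ = wβ ((col : ℕ) / n) * ((c0 * (x (tOf col))⁻¹ + g.eval (x (tOf col))) * c col) := by
            rw [hid]
        _ = _ := by ring
    rw [Finset.sum_congr rfl fun col _ => h3 col, Finset.sum_add_distrib, h2, add_zero,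
      ← Finset.mul_sum, hRowInv, mul_zero]
  -- terms vanish off Fs
  have hvanish : ∀ col : Fin (μ * n), col ∉ Fs → fT.eval (x (tOf col)) * c col = 0 := by
    intro col hcol
    rcases eq_or_ne (c col) 0 with h | h
    · rw [h, mul_zero]
    · have hrange : col ∈ Set.range e := by
        by_contra hr'
        exact h (hcout col hr')
      rw [herange] at hrange
      rcases (Set.mem_union _ _ _).1 hrange with hmem | hmem
      · have ht' : tOf col ∈ T := by simpa [htOf] using hmem
        rw [hfevalT _ ht', zero_mul]
      · exact absurd (Finset.mem_coe.1 hmem) hcol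
  -- Fs = {f1, f2}
  obtain ⟨f1, f2, hf12, hFspair⟩ := Finset.card_eq_two.1 hFs
  have hf1Fs : f1 ∈ Fs := by rw [hFspair]; exact Finset.mem_insert_self _ _
  have hf2Fs : f2 ∈ Fs := by rw [hFspair]; simp
  have hA2 : fT.eval (x (tOf f1)) * c f1 + fT.eval (x (tOf f2)) * c f2 = 0 := by
    rw [← Finset.sum_pair hf12 (f := fun col => fT.eval (x (tOf col)) * c col), ← hFspair,
      ← hAfull]
    exact Finset.sum_subset (Finset.subset_univ Fs) fun col _ hcol => hvanish col hcol
  have hB2 : wβ ((f1 : ℕ) / n) * ((x (tOf f1))⁻¹ * (fT.eval (x (tOf f1)) * c f1))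
      + wβ ((f2 : ℕ) / n) * ((x (tOf f2))⁻¹ * (fT.eval (x (tOf f2)) * c f2)) = 0 := by
    rw [← Finset.sum_pair hf12
      (f := fun col : Fin (μ * n) =>
        wβ ((col : ℕ) / n) * ((x (tOf col))⁻¹ * (fT.eval (x (tOf col)) * c col))),
      ← hFspair, ← hBfull]
    refine Finset.sum_subset (Finset.subset_univ Fs) fun col _ hcol => ?_
    rw [hvanish col hcol, mul_zero, mul_zero]
  -- the two gamma coefficients are distinct
  have hwx : ∀ f : Fin (μ * n), wβ ((f : ℕ) / n) * (x (tOf f))⁻¹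
      = ((β ^ (-(((f : ℕ) / n * (r * n) + et ((f : ℕ) % n) : ℕ) : ℤ)) : Fˣ) : F) := by
    intro f
    rw [hwβ, hx, hxu, htOf]
    rw [← Units.val_inv_eq_inv_val, ← Units.val_mul]
    congr 1
    show β ^ (-(((f : ℕ) / n : ℕ) * ((r * n : ℕ) : ℤ) : ℤ)) * (β ^ et ((f : ℕ) % n))⁻¹ = _
    rw [← zpow_natCast β (et ((f : ℕ) % n)), ← zpow_neg, ← zpow_add]
    congr 1
    push_cast
    ring
  have hE : ∀ f : Fin (μ * n), (f : ℕ) / n * (r * n) + et ((f : ℕ) % n) < orderOf β := by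
    intro f
    have h1 : et ((f : ℕ) % n) < b * n := hetlt _ (Nat.mod_lt _ hn)
    have h1' : et ((f : ℕ) % n) < r * n :=
      lt_of_lt_of_le h1 (Nat.mul_le_mul_right n hbr)
    have h2 : (f : ℕ) / n + 1 ≤ μ := hjlt f
    calc (f : ℕ) / n * (r * n) + et ((f : ℕ) % n)
        < (f : ℕ) / n * (r * n) + r * n := by omega
      _ = ((f : ℕ) / n + 1) * (r * n) := by ring
      _ ≤ μ * (r * n) := Nat.mul_le_mul_right _ h2
      _ = r * n * μ := by ring
      _ ≤ orderOf β := hrnμ_ord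
  have hEinj : ∀ fA fB : Fin (μ * n),
      (fA : ℕ) / n * (r * n) + et ((fA : ℕ) % n)
        = (fB : ℕ) / n * (r * n) + et ((fB : ℕ) % n) → fA = fB := by
    intro fA fB hEq
    have hmod : ∀ f : Fin (μ * n),
        ((f : ℕ) / n * (r * n) + et ((f : ℕ) % n)) % n = (f : ℕ) % n := by
      intro f
      have hrw : (f : ℕ) / n * (r * n) + et ((f : ℕ) % n)
          = (f : ℕ) % n + ((f : ℕ) / n * r + a / b ^ ((f : ℕ) % n) % b) * n := by
        show (f : ℕ) / n * (r * n) + ((f : ℕ) % n + a / b ^ ((f : ℕ) % n) % b * n) = _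
        ring
      rw [hrw, Nat.add_mul_mod_self_right, Nat.mod_eq_of_lt (Nat.mod_lt _ hn)]
    have ht : (fA : ℕ) % n = (fB : ℕ) % n := by
      rw [← hmod fA, ← hmod fB, hEq]
    have hetEq : et ((fA : ℕ) % n) = et ((fB : ℕ) % n) := by rw [ht]
    have hdiv : (fA : ℕ) / n * (r * n) = (fB : ℕ) / n * (r * n) := by omega
    have hdiv2 : (fA : ℕ) / n = (fB : ℕ) / n :=
      Nat.eq_of_mul_eq_mul_right (by positivity) hdiv
    apply Fin.ext
    conv_lhs => rw [← Nat.div_add_mod (fA : ℕ) n]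
    conv_rhs => rw [← Nat.div_add_mod (fB : ℕ) n]
    rw [hdiv2, ht]
  have hγne : wβ ((f1 : ℕ) / n) * (x (tOf f1))⁻¹ ≠ wβ ((f2 : ℕ) / n) * (x (tOf f2))⁻¹ := by
    rw [hwx f1, hwx f2]
    intro hEq
    have hu : (β ^ (-(((f1 : ℕ) / n * (r * n) + et ((f1 : ℕ) % n) : ℕ) : ℤ)) : Fˣ)
        = β ^ (-(((f2 : ℕ) / n * (r * n) + et ((f2 : ℕ) % n) : ℕ) : ℤ)) := Units.ext hEq
    rw [zpow_neg, zpow_neg] at hu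
    have hu2 := inv_inj.mp hu
    rw [zpow_natCast, zpow_natCast] at hu2
    have hEeq := pow_injOn_Iio_orderOf (Set.mem_Iio.2 (hE f1)) (Set.mem_Iio.2 (hE f2)) hu2
    exact hf12 (hEinj f1 f2 hEeq)
  -- solve the 2x2 system
  have ht1 : tOf f1 ∉ T := by simpa [htOf] using hFsT f1 hf1Fs
  have ht2 : tOf f2 ∉ T := by simpa [htOf] using hFsT f2 hf2Fs
  have hfe1 : fT.eval (x (tOf f1)) ≠ 0 := hfevalne _ ht1
  have hfe2 : fT.eval (x (tOf f2)) ≠ 0 := hfevalne _ ht2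
  have hu1 : fT.eval (x (tOf f1)) * c f1 = 0 := by
    have hsub : fT.eval (x (tOf f2)) * c f2 = -(fT.eval (x (tOf f1)) * c f1) :=
      eq_neg_of_add_eq_zero_right hA2
    rw [hsub] at hB2
    have hfac : (wβ ((f1 : ℕ) / n) * (x (tOf f1))⁻¹ - wβ ((f2 : ℕ) / n) * (x (tOf f2))⁻¹)
        * (fT.eval (x (tOf f1)) * c f1) = 0 := by
      rw [sub_mul]
      rw [← hB2]
      ring
    rcases mul_eq_zero.1 hfac with h | h
    · exact absurd (sub_eq_zero.1 h) hγne
    · exact h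
  have hu2 : fT.eval (x (tOf f2)) * c f2 = 0 := by
    have h := eq_neg_of_add_eq_zero_right hA2
    rw [hu1, neg_zero] at h
    exact h
  have hcf1 : c f1 = 0 := (mul_eq_zero.1 hu1).resolve_left hfe1
  have hcf2 : c f2 = 0 := (mul_eq_zero.1 hu2).resolve_left hfe2
  have hcFs : ∀ f ∈ Fs, c f = 0 := by
    intro f hf
    rw [hFspair] at hf
    rcases Finset.mem_insert.1 hf with h | h
    · rw [h]; exact hcf1
    · rw [Finset.mem_singleton.1 h]; exact hcf2
  -- now all coefficients vanish
  have hcall : ∀ col : Fin (μ * n), c col = 0 := by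
    intro col
    rcases eq_or_ne (c col) 0 with h | h
    · exact h
    have hrange : col ∈ Set.range e := by
      by_contra hr'
      exact h (hcout col hr')
    rw [herange] at hrange
    rcases (Set.mem_union _ _ _).1 hrange with hmem | hmem
    swap
    · exact hcFs col (Finset.mem_coe.1 hmem)
    exfalso
    apply h
    have ht0 : tOf col ∈ T := by simpa [htOf] using hmem
    set Ps : Polynomial F := ∏ t ∈ T.erase (tOf col), (Polynomial.X - Polynomial.C (x t))
      with hPs
    have hPsdeg : Ps.natDegree < r := by
      rw [hPs, Polynomial.natDegree_prod_of_monic _ _ fun t _ => Polynomial.monic_X_sub_C _]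
      simp only [Polynomial.natDegree_X_sub_C, Finset.sum_const, smul_eq_mul, mul_one]
      rw [Finset.card_erase_of_mem ht0, hT]
      omega
    have h0 := hgroupP ((col : ℕ) / n) (hjlt col) Ps hPsdeg
    have hsingle : ∑ col' ∈ Finset.univ.filter
          (fun col' : Fin (μ * n) => (col' : ℕ) / n = (col : ℕ) / n),
        Ps.eval (x (tOf col')) * c col' = Ps.eval (x (tOf col)) * c col := by
      refine Finset.sum_eq_single_of_mem col
        (Finset.mem_filter.2 ⟨Finset.mem_univ _, rfl⟩) ?_
      intro col' hcol' hne
      rcases eq_or_ne (c col') 0 with h' | h'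
      · rw [h', mul_zero]
      have hr2 : col' ∈ Set.range e := by
        by_contra hr'
        exact h' (hcout col' hr')
      rw [herange] at hr2
      rcases (Set.mem_union _ _ _).1 hr2 with hmem' | hmem'
      · have ht' : tOf col' ∈ T := by simpa [htOf] using hmem'
        have hne' : tOf col' ≠ tOf col := by
          intro hEq
          apply hne
          apply Fin.ext
          have h1 : (col' : ℕ) % n = (col : ℕ) % n := by
            have := congrArg Fin.val hEq
            simpa [htOf] using this
          have h2 : (col' : ℕ) / n = (col : ℕ) / n := (Finset.mem_filter.1 hcol').2
          conv_lhs => rw [← Nat.div_add_mod (col' : ℕ) n]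
          conv_rhs => rw [← Nat.div_add_mod (col : ℕ) n]
          rw [h1, h2]
        have hz : Ps.eval (x (tOf col')) = 0 := by
          rw [hPs, Polynomial.eval_prod]
          exact Finset.prod_eq_zero (Finset.mem_erase.2 ⟨hne', ht'⟩) (by simp)
        rw [hz, zero_mul]
      · exact absurd (hcFs col' (Finset.mem_coe.1 hmem')) h'
    rw [hsingle] at h0
    have hPsne : Ps.eval (x (tOf col)) ≠ 0 := by
      rw [hPs, Polynomial.eval_prod]
      refine Finset.prod_ne_zero_iff.2 fun t ht => ?_
      simp only [Polynomial.eval_sub, Polynomial.eval_X, Polynomial.eval_C]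
      exact sub_ne_zero.2 fun hx' => (Finset.mem_erase.1 ht).1 (hxinj hx').symm
    exact (mul_eq_zero.1 h0).resolve_left hPsne
  apply hv0
  funext k
  show v k = 0
  rw [← hce k]
  exact hcall (e k)
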